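/- For E a category with pullbacks, polynomials in E (exponentiable morphisms) together with isomorphism classes of polynomial morphisms form a category Poly_E, i.e., the given composition of polynomial morphisms is associative and unital. -/

import Mathlib

open CategoryTheory Limits

universe v u

variable (E : Type u) [Category.{v} E] [HasPullbacks E]

/-- A polynomial in a category `E` with pullbacks: an exponentiable morphism. -/
structure PolyObj : Type (max u v) where
  dom : E
  cod : E
  map : dom ⟶ cod
  exp : (Over.pullback map).IsLeftAdjoint

variable {E}

/-- A morphism of polynomials `p → q`: a map on positions `base : P ⟶ Q` together with a map
on directions `lift : P ×_Q Q* ⟶ P*` lying over `P`.  (Since `E` has chosen pullbacks, such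
pairs represent exactly the isomorphism classes of diagrams of the paper.) -/
structure PolyHom (p q : PolyObj E) : Type v where
  base : p.cod ⟶ q.cod
  lift : pullback base q.map ⟶ p.dom
  w : lift ≫ p.map = pullback.fst base q.map

/-- The identity morphism of polynomials. -/
noncomputable def PolyHom.id (p : PolyObj E) : PolyHom p p where
  base := 𝟙 p.cod
  lift := pullback.snd (𝟙 p.cod) p.map
  w := by simpa using (pullback.condition (f := 𝟙 p.cod) (g := p.map)).symm

/-- Composition of morphisms of polynomials. -/
noncomputable def PolyHom.comp {p q r : PolyObj E} (φ : PolyHom p q) (ψ : PolyHom q r) : PolyHom p r where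
  base := φ.base ≫ ψ.base
  lift :=
    pullback.lift (pullback.fst (φ.base ≫ ψ.base) r.map)
      (pullback.map (φ.base ≫ ψ.base) r.map ψ.base r.map φ.base (𝟙 _) (𝟙 _)
        (by simp) (by simp) ≫ ψ.lift)
      (by rw [Category.assoc, ψ.w, pullback.lift_fst]) ≫ φ.lift
  w := by rw [Category.assoc, φ.w, pullback.lift_fst]

/-- Polynomials and morphisms of polynomials form a category: the composition above is
associative and unital (up to the canonical identifications of pullbacks along equal
morphisms). -/
theorem polyHom_assoc_and_unital {p q r s : PolyObj E}
    (φ : PolyHom p q) (ψ : PolyHom q r) (χ : PolyHom r s) :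
    ((φ.comp ψ).comp χ).base = (φ.comp (ψ.comp χ)).base ∧
    ((φ.comp ψ).comp χ).lift =
      (pullback.congrHom (Category.assoc φ.base ψ.base χ.base) rfl).hom ≫
        (φ.comp (ψ.comp χ)).lift ∧
    ((PolyHom.id p).comp φ).base = φ.base ∧
    ((PolyHom.id p).comp φ).lift =
      (pullback.congrHom (Category.id_comp φ.base) rfl).hom ≫ φ.lift ∧
    (φ.comp (PolyHom.id q)).base = φ.base ∧
    (φ.comp (PolyHom.id q)).lift =
      (pullback.congrHom (Category.comp_id φ.base) rfl).hom ≫ φ.lift := by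
  refine ⟨Category.assoc .., ?_, by simp [PolyHom.comp, PolyHom.id], ?_, by simp [PolyHom.comp, PolyHom.id], ?_⟩
  · simp only [PolyHom.comp]
    rw [← Category.assoc, ← Category.assoc]
    refine congrArg (· ≫ φ.lift) ?_
    apply pullback.hom_ext
    · simp only [Category.assoc]
      erw [pullback.lift_fst, pullback.lift_fst, pullback.lift_fst]
      erw [pullback.congrHom_hom]
      erw [pullback.lift_fst]
      simp
    · simp only [Category.assoc, pullback.lift_snd]
      simp only [← Category.assoc]
      refine congrArg (· ≫ ψ.lift) ?_
      apply pullback.hom_ext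
      · erw [pullback.congrHom_hom]
        simp only [Category.assoc]
        repeat erw [pullback.lift_fst]
        erw [pullback.lift_fst_assoc, pullback.lift_fst_assoc]
        erw [Category.comp_id]
      · simp only [Category.assoc, pullback.lift_snd, Category.comp_id]
        simp only [← Category.assoc]
        refine congrArg (· ≫ χ.lift) ?_
        apply pullback.hom_ext
        · erw [pullback.congrHom_hom]
          simp only [Category.assoc]
          repeat erw [pullback.lift_fst]
          erw [pullback.lift_fst_assoc]
          simp only [Category.assoc]
          erw [pullback.lift_fst_assoc]
          erw [Category.comp_id]
        · erw [pullback.congrHom_hom]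
          simp only [Category.assoc]
          repeat erw [pullback.lift_snd]
          erw [pullback.lift_snd_assoc]
          simp only [Category.assoc, Category.comp_id]
          erw [pullback.lift_snd]
          exact (Category.comp_id _).symm
  · simp only [PolyHom.comp, PolyHom.id]
    rw [pullback.lift_snd]
    refine congrArg (· ≫ φ.lift) ?_
    apply pullback.hom_ext <;> simp [pullback.congrHom]
  · simp only [PolyHom.comp, PolyHom.id]
    refine congrArg (· ≫ φ.lift) ?_
    apply pullback.hom_ext
    · erw [pullback.congrHom_hom]
      erw [pullback.lift_fst, pullback.lift_fst]
      exact (Category.comp_id _).symm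
    · erw [pullback.congrHom_hom]
      erw [pullback.lift_snd, pullback.lift_snd, pullback.lift_snd]
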